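/- With f the unique càdlàg solution of f(t) = a₀ + Σ_{(x,y)∈Π} 1_{(t₀,t]}(x) y^⟨−1/α(f(x₋))⟩, for any t₀ ≤ s < t < t₁ the value f(t) is completely determined by f(s) and the points of Π ∩ ((s,t] × ℝ): that is, f restricted to [s,t] is the unique càdlàg solution of g(t') = f(s) + Σ_{(x,y)∈Π} 1_{(s,t']}(x) y^⟨−1/α(g(x₋))⟩ for t' ∈ [s,t]. -/

import Mathlib

open MeasureTheory Filter Set
open Topology

noncomputable def spow (r s : ℝ) : ℝ := Real.sign r * |r| ^ s

noncomputable def wab (a b y : ℝ) : ℝ :=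
  max (|y| ^ (-1 / a) * (1 + abs (Real.log (abs y)))) (|y| ^ (-1 / b) * (1 + abs (Real.log (abs y))))

noncomputable def Mconst (α : ℝ → ℝ) : ℝ := ⨆ ξ : ℝ, |deriv α ξ| / (α ξ) ^ 2

/-- Càdlàg on `[t₀,t₁)`: right-continuous on `[t₀,t₁)` and left limits exist on `(t₀,t₁]`. -/
def CadlagOn (f : ℝ → ℝ) (t₀ t₁ : ℝ) : Prop :=
  (∀ u ∈ Set.Ico t₀ t₁, Filter.Tendsto f (nhdsWithin u (Set.Ioi u)) (nhds (f u))) ∧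
  (∀ u ∈ Set.Ioc t₀ t₁, ∃ L, Filter.Tendsto f (nhdsWithin u (Set.Iio u)) (nhds L))

/-- The sum `∑_{(x,y)∈Λ} 1_{(t₀,t]}(x) y^⟨-1/α(f(x₋))⟩`. -/
noncomputable def jumpSum (α : ℝ → ℝ) (Λ : Set (ℝ × ℝ)) (t₀ t : ℝ) (f : ℝ → ℝ) : ℝ :=
  ∑' p : Λ, if (p : ℝ × ℝ).1 ∈ Set.Ioc t₀ t
    then spow (p : ℝ × ℝ).2 (-1 / α (Function.leftLim f (p : ℝ × ℝ).1)) else 0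

/-- The truncated sum over points with `|y| ≤ n`. -/
noncomputable def jumpSumTrunc (α : ℝ → ℝ) (Λ : Set (ℝ × ℝ)) (n : ℝ) (t₀ t : ℝ) (f : ℝ → ℝ) : ℝ :=
  ∑' p : Λ, if |(p : ℝ × ℝ).2| ≤ n ∧ (p : ℝ × ℝ).1 ∈ Set.Ioc t₀ t
    then spow (p : ℝ × ℝ).2 (-1 / α (Function.leftLim f (p : ℝ × ℝ).1)) else 0

/-! ### Auxiliary lemmas -/

lemma wab_nonneg (a b y : ℝ) : 0 ≤ wab a b y :=
  le_trans (by positivity) (le_max_left _ _)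

lemma wab_zero {a b : ℝ} (ha : 0 < a) (hb : 0 < b) : wab a b 0 = 0 := by
  rw [wab]
  rw [abs_zero, Real.zero_rpow (by positivity : -1/a ≠ 0), Real.zero_rpow (by positivity : -1/b ≠ 0)]
  simp

lemma rpow_mul_log_le_wab {a b c y : ℝ} (ha : 0 < a) (hc : c ∈ Set.Icc a b) :
    |y| ^ (-1 / c) * (1 + abs (Real.log (abs y))) ≤ wab a b y := by
  have hc0 : 0 < c := lt_of_lt_of_le ha hc.1
  have hb0 : 0 < b := lt_of_lt_of_le hc0 hc.2
  have hfac : (0:ℝ) ≤ 1 + abs (Real.log (abs y)) := by positivity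
  rcases eq_or_lt_of_le (abs_nonneg y) with h0 | h0
  · rw [← h0, Real.zero_rpow (by positivity : -1/c ≠ 0)]
    simpa using wab_nonneg a b y
  rcases le_or_gt (|y|) 1 with h1 | h1
  · refine le_trans ?_ (le_max_left _ _)
    apply mul_le_mul_of_nonneg_right _ hfac
    apply Real.rpow_le_rpow_of_exponent_ge h0 h1
    rw [neg_div, neg_div, neg_le_neg_iff]
    exact one_div_le_one_div_of_le ha hc.1
  · refine le_trans ?_ (le_max_right _ _)
    apply mul_le_mul_of_nonneg_right _ hfac
    apply Real.rpow_le_rpow_of_exponent_le h1.le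
    rw [neg_div, neg_div, neg_le_neg_iff]
    exact one_div_le_one_div_of_le hc0 hc.2

lemma abs_spow_le {a b c y : ℝ} (ha : 0 < a) (hc : c ∈ Set.Icc a b) :
    |spow y (-1 / c)| ≤ wab a b y := by
  have h1 : |spow y (-1/c)| ≤ |y| ^ (-1/c) := by
    rw [spow, abs_mul, abs_of_nonneg (Real.rpow_nonneg (abs_nonneg y) _)]
    have : |Real.sign y| ≤ 1 := by
      rcases lt_trichotomy y 0 with h|h|h
      · simp [Real.sign_of_neg h]
      · simp [h]
      · simp [Real.sign_of_pos h]
    nlinarith [Real.rpow_nonneg (abs_nonneg y) (-1/c)]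
  refine h1.trans (le_trans ?_ (rpow_mul_log_le_wab ha hc))
  nlinarith [Real.rpow_nonneg (abs_nonneg y) (-1/c), abs_nonneg (Real.log |y|)]

lemma spow_lipschitz {a b C : ℝ} (ha : 0 < a) (α : ℝ → ℝ) (hrange : ∀ x, α x ∈ Set.Icc a b)
    (hsmooth : ContDiff ℝ 1 α) (hC : ∀ x, |deriv α x| ≤ C) (y c c' : ℝ) :
    |spow y (-1 / α c) - spow y (-1 / α c')| ≤ C / a ^ 2 * wab a b y * |c - c'| := by
  have hC0 : 0 ≤ C := le_trans (abs_nonneg _) (hC 0)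
  rcases eq_or_ne y 0 with rfl | hy
  · simp only [spow, Real.sign_zero, zero_mul, sub_zero, abs_zero]
    exact mul_nonneg (mul_nonneg (by positivity) (wab_nonneg a b 0)) (abs_nonneg _)
  have hA : 0 < |y| := abs_pos.2 hy
  set F : ℝ → ℝ := fun c => |y| ^ (-1 / α c) with hF
  set F' : ℝ → ℝ := fun x => (deriv α x / α x ^ 2) * (|y| ^ (-1 / α x) * Real.log |y|) with hF'
  have hderiv : ∀ x, HasDerivAt F (F' x) x := by
    intro x
    have hαx : α x ≠ 0 := ne_of_gt (lt_of_lt_of_le ha (hrange x).1)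
    have h1 : HasDerivAt α (deriv α x) x :=
      ((hsmooth.differentiable (by norm_num)) x).hasDerivAt
    have h2 : HasDerivAt (fun c => -1 / α c)
        ((0 * α x - (-1) * deriv α x) / α x ^ 2) x :=
      (hasDerivAt_const x (-1)).div h1 hαx
    have h3 := (hasDerivAt_const x |y|).rpow h2 hA
    convert h3 using 1
    simp only [hF']
    field_simp
    ring
  have hbound : ∀ x, |F' x| ≤ C / a ^ 2 * wab a b y := by
    intro x
    rw [hF', abs_mul]
    have e1 : |deriv α x / α x ^ 2| ≤ C / a ^ 2 := by
      rw [abs_div, abs_of_nonneg (by positivity : (0:ℝ) ≤ α x ^ 2)]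
      apply div_le_div₀ hC0 (hC x) (by positivity)
      have := (hrange x).1
      nlinarith
    have e2 : |(|y| ^ (-1 / α x) * Real.log |y|)| ≤ wab a b y := by
      rw [abs_mul, abs_of_nonneg (Real.rpow_nonneg (abs_nonneg y) _)]
      refine le_trans ?_ (rpow_mul_log_le_wab ha (hrange x))
      have h1 : (0:ℝ) ≤ |y| ^ (-1 / α x) := Real.rpow_nonneg (abs_nonneg y) _
      nlinarith [abs_nonneg (Real.log |y|)]
    exact mul_le_mul e1 e2 (abs_nonneg _) (by positivity)
  have key : |F c - F c'| ≤ C / a ^ 2 * wab a b y * |c - c'| := by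
    have := Convex.norm_image_sub_le_of_norm_hasDerivWithin_le
      (f := F) (f' := F') (C := C / a ^ 2 * wab a b y)
      (fun x _ => (hderiv x).hasDerivWithinAt)
      (fun x _ => by simpa using hbound x) convex_univ (Set.mem_univ c') (Set.mem_univ c)
    simpa [Real.norm_eq_abs] using this
  have heq : spow y (-1 / α c) - spow y (-1 / α c') = Real.sign y * (F c - F c') := by
    simp [spow, hF]; ring
  rw [heq, abs_mul]
  have hs1 : |Real.sign y| ≤ 1 := by
    rcases lt_trichotomy y 0 with h|h|h
    · simp [Real.sign_of_neg h]
    · simp [h]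
    · simp [Real.sign_of_pos h]
  nlinarith [abs_nonneg (F c - F c'), abs_nonneg (Real.sign y),
    mul_le_mul_of_nonneg_right hs1 (abs_nonneg (F c - F c'))]

lemma wab_summable {a b b' : ℝ} {Λ : Set (ℝ × ℝ)} (ha : 0 < a) (hab : a < b) (hbb' : b < b')
    (hΛ : Summable fun p : Λ => |(p : ℝ × ℝ).2| ^ (-1 / b')) :
    Summable fun p : Λ => wab a b (p : ℝ × ℝ).2 := by
  classical
  have hb : 0 < b := ha.trans hab
  have hb'0 : 0 < b' := hb.trans hbb'
  set δ : ℝ := 1 / b - 1 / b' with hδ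
  have hδ0 : 0 < δ := by
    rw [hδ, sub_pos]
    exact one_div_lt_one_div_of_lt hb hbb'
  set C2 : ℝ := 1 + 1 / δ with hC2
  have hC20 : 0 ≤ C2 := by positivity
  have hbig : ∀ y : ℝ, 1 < |y| → wab a b y ≤ C2 * |y| ^ (-1 / b') := by
    intro y hy
    have hA0 : (0:ℝ) < |y| := lt_trans one_pos hy
    have hlog : 0 ≤ Real.log |y| := Real.log_nonneg hy.le
    have hX : abs (Real.log (abs y)) = Real.log |y| := abs_of_nonneg hlog
    have e1 : |y| ^ (-1/a) ≤ |y| ^ (-1/b) := by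
      apply Real.rpow_le_rpow_of_exponent_le hy.le
      rw [neg_div, neg_div, neg_le_neg_iff]
      exact one_div_le_one_div_of_le ha hab.le
    have e2 : wab a b y = |y| ^ (-1/b) * (1 + Real.log |y|) := by
      rw [wab, hX, max_eq_right]
      exact mul_le_mul_of_nonneg_right e1 (by positivity)
    rw [e2]
    have e3 : |y| ^ (-1/b) = |y| ^ (-1/b') * |y| ^ (-δ) := by
      rw [← Real.rpow_add hA0]; congr 1; rw [hδ]; ring
    rw [e3]
    have e4 : |y| ^ (-δ) * (1 + Real.log |y|) ≤ C2 := by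
      have h5 : |y| ^ (-δ) ≤ 1 := Real.rpow_le_one_of_one_le_of_nonpos hy.le (by linarith)
      have h6 : Real.log |y| ≤ |y| ^ δ / δ := Real.log_le_rpow_div (abs_nonneg y) hδ0
      have h7 : |y| ^ (-δ) * |y| ^ δ = 1 := by
        rw [← Real.rpow_add hA0]; simp
      have h8 : 0 ≤ |y| ^ (-δ) := Real.rpow_nonneg (abs_nonneg y) _
      have h9 : |y| ^ (-δ) * Real.log |y| ≤ 1 / δ := by
        calc |y| ^ (-δ) * Real.log |y| ≤ |y| ^ (-δ) * (|y| ^ δ / δ) :=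
              mul_le_mul_of_nonneg_left h6 h8
          _ = (|y| ^ (-δ) * |y| ^ δ) / δ := by ring
          _ = 1 / δ := by rw [h7]
      rw [hC2]; nlinarith
    calc |y| ^ (-1/b') * |y| ^ (-δ) * (1 + Real.log |y|)
        = (|y| ^ (-δ) * (1 + Real.log |y|)) * |y| ^ (-1/b') := by ring
      _ ≤ C2 * |y| ^ (-1/b') := by
          apply mul_le_mul_of_nonneg_right e4 (Real.rpow_nonneg (abs_nonneg y) _)
  have hfin : {p : Λ | ¬ (|(p : ℝ × ℝ).2| ^ (-1/b') < 1)}.Finite := by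
    have := hΛ.tendsto_cofinite_zero.eventually_lt_const (by norm_num : (0:ℝ) < 1)
    exact Filter.eventually_cofinite.1 this
  have hsupp : {p : Λ | |(p : ℝ × ℝ).2| ≤ 1 ∧ wab a b (p : ℝ × ℝ).2 ≠ 0}.Finite := by
    apply hfin.subset
    rintro p ⟨h1, h2⟩
    simp only [Set.mem_setOf_eq, not_lt]
    have hy0 : (p : ℝ × ℝ).2 ≠ 0 := by
      intro h
      exact h2 (by rw [h, wab_zero ha hb])
    exact Real.one_le_rpow_of_pos_of_le_one_of_nonpos (abs_pos.2 hy0) h1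
      (by rw [neg_div, neg_nonpos]; positivity)
  have h1 : Summable fun p : Λ => if |(p : ℝ × ℝ).2| ≤ 1 then wab a b (p : ℝ × ℝ).2 else 0 := by
    apply summable_of_finite_support
    apply hsupp.subset
    intro p hp
    simp only [Function.mem_support] at hp
    by_cases h : |(p : ℝ × ℝ).2| ≤ 1
    · rw [if_pos h] at hp; exact ⟨h, hp⟩
    · rw [if_neg h] at hp; exact absurd rfl hp
  have h2 : Summable fun p : Λ => if |(p : ℝ × ℝ).2| ≤ 1 then 0 else wab a b (p : ℝ × ℝ).2 := by
    apply Summable.of_nonneg_of_le _ _ (hΛ.mul_left C2)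
    · intro p; split_ifs
      · exact le_rfl
      · exact wab_nonneg _ _ _
    · intro p; split_ifs with h
      · positivity
      · exact hbig _ (not_le.1 h)
  have h3 := h1.add h2
  apply h3.congr
  intro p
  by_cases h : |(p : ℝ × ℝ).2| ≤ 1 <;> simp [h]

lemma interval_induction {s t : ℝ} (P : ℝ → Prop) (hst : s ≤ t) (hs : P s)
    (hmono : ∀ v w, s ≤ v → v ≤ w → P w → P v)
    (hclosed : ∀ c, s < c → c ≤ t → (∀ v, s ≤ v → v < c → P v) → P c)
    (hstep : ∀ v, s ≤ v → v < t → P v → ∃ w, v < w ∧ w ≤ t ∧ P w) : P t := by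
  set A := {v | v ∈ Set.Icc s t ∧ P v} with hA
  have hne : A.Nonempty := ⟨s, ⟨le_rfl, hst⟩, hs⟩
  have hbdd : BddAbove A := ⟨t, fun v hv => hv.1.2⟩
  set c := sSup A with hc
  have hsc : s ≤ c := le_csSup hbdd ⟨⟨le_rfl, hst⟩, hs⟩
  have hct : c ≤ t := csSup_le hne (fun v hv => hv.1.2)
  have hPc : P c := by
    rcases eq_or_lt_of_le hsc with h | h
    · exact h ▸ hs
    · apply hclosed c h hct
      intro v hsv hvc
      obtain ⟨w, hwA, hvw⟩ := exists_lt_of_lt_csSup hne hvc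
      exact hmono v w hsv hvw.le hwA.2
  rcases eq_or_lt_of_le hct with h | h
  · exact h ▸ hPc
  · obtain ⟨w, h1, h2, h3⟩ := hstep c hsc h hPc
    exact absurd (le_csSup hbdd ⟨⟨hsc.trans h1.le, h2⟩, h3⟩) (not_le.2 h1)

lemma bdd_of_cadlag {f : ℝ → ℝ} {s t : ℝ} (hst : s ≤ t)
    (hr : ∀ u ∈ Set.Ico s t, Filter.Tendsto f (nhdsWithin u (Set.Ioi u)) (nhds (f u)))
    (hl : ∀ u ∈ Set.Ioc s t, ∃ L, Filter.Tendsto f (nhdsWithin u (Set.Iio u)) (nhds L)) :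
    ∃ R, ∀ u ∈ Set.Icc s t, |f u| ≤ R := by
  have key := interval_induction (s := s) (t := t)
    (P := fun v => ∃ R, ∀ u ∈ Set.Icc s v, |f u| ≤ R) hst
    ⟨|f s|, fun u hu => by rw [le_antisymm hu.2 hu.1]⟩
    (fun v w _ hvw h => h.imp (fun R hR u hu => hR u ⟨hu.1, hu.2.trans hvw⟩))
    ?_ ?_
  · exact key
  · intro c hsc hct hind
    obtain ⟨L, hL⟩ := hl c ⟨hsc, hct⟩
    have hev : ∀ᶠ u in nhdsWithin c (Set.Iio c), |f u| < |L| + 1 :=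
      hL.abs.eventually_lt_const (lt_add_one _)
    obtain ⟨l, hl', hsub⟩ := (mem_nhdsLT_iff_exists_mem_Ico_Ioo_subset hsc).1 hev
    obtain ⟨R, hR⟩ := hind l hl'.1 hl'.2
    refine ⟨max R (max (|L| + 1) (|f c|)), ?_⟩
    intro u hu
    rcases le_or_gt u l with h | h
    · exact le_max_of_le_left (hR u ⟨hu.1, h⟩)
    · rcases eq_or_lt_of_le hu.2 with h2 | h2
      · rw [h2]; exact le_max_of_le_right (le_max_right _ _)
      · exact le_max_of_le_right (le_max_of_le_left (hsub ⟨h, h2⟩).le)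
  · intro v hsv hvt hP
    obtain ⟨R, hR⟩ := hP
    have hev : ∀ᶠ u in nhdsWithin v (Set.Ioi v), |f u| < |f v| + 1 :=
      (hr v ⟨hsv, hvt⟩).abs.eventually_lt_const (lt_add_one _)
    obtain ⟨u0, hu0, hsub⟩ := mem_nhdsGT_iff_exists_Ioo_subset.1 hev
    have hu0v : v < u0 := hu0
    refine ⟨min ((v + u0) / 2) t, ?_, min_le_right _ _, max R (|f v| + 1), ?_⟩
    · simp only [lt_min_iff]
      exact ⟨by linarith, hvt⟩
    · intro u hu
      rcases le_or_gt u v with h | h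
      · exact le_max_of_le_left (hR u ⟨hu.1, h⟩)
      · refine le_max_of_le_right (le_of_lt ?_)
        apply hsub
        have h2 := hu.2
        simp only [le_min_iff] at h2
        exact ⟨h, by linarith [h2.1]⟩

lemma leftLim_diff_bound {g f : ℝ → ℝ} {s x B : ℝ} (hsx : s < x)
    (hg : ∃ L, Filter.Tendsto g (nhdsWithin x (Set.Iio x)) (nhds L))
    (hf : ∃ L, Filter.Tendsto f (nhdsWithin x (Set.Iio x)) (nhds L))
    (hB : ∀ u ∈ Set.Ioo s x, |g u - f u| ≤ B) :
    |Function.leftLim g x - Function.leftLim f x| ≤ B := by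
  obtain ⟨Lg, hLg⟩ := hg; obtain ⟨Lf, hLf⟩ := hf
  have hne : 𝓝[<] x ≠ ⊥ := (nhdsLT_neBot x).ne
  rw [leftLim_eq_of_tendsto hLg, leftLim_eq_of_tendsto hLf]
  have ht : Filter.Tendsto (fun u => |g u - f u|) (𝓝[<] x) (nhds |Lg - Lf|) := (hLg.sub hLf).abs
  apply le_of_tendsto ht
  filter_upwards [Ioo_mem_nhdsLT hsx] with u hu
  exact hB u hu

lemma leftLim_eq_of_eqOn {g f : ℝ → ℝ} {s x : ℝ} (hsx : s < x)
    (hg : ∃ L, Filter.Tendsto g (nhdsWithin x (Set.Iio x)) (nhds L))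
    (hf : ∃ L, Filter.Tendsto f (nhdsWithin x (Set.Iio x)) (nhds L))
    (heq : ∀ u ∈ Set.Ioo s x, g u = f u) :
    Function.leftLim g x = Function.leftLim f x := by
  have h := leftLim_diff_bound hsx hg hf (B := 0) (fun u hu => by rw [heq u hu]; simp)
  have h2 := abs_nonneg (Function.leftLim g x - Function.leftLim f x)
  have h3 : |Function.leftLim g x - Function.leftLim f x| = 0 := le_antisymm h h2
  exact sub_eq_zero.1 (abs_eq_zero.1 h3)

/-- The individual term of `jumpSum`. -/
noncomputable def dterm (α : ℝ → ℝ) (Λ : Set (ℝ × ℝ)) (s' t' : ℝ) (h : ℝ → ℝ) (p : Λ) : ℝ :=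
  if (p : ℝ × ℝ).1 ∈ Set.Ioc s' t'
    then spow (p : ℝ × ℝ).2 (-1 / α (Function.leftLim h (p : ℝ × ℝ).1)) else 0

lemma jumpSum_eq (α : ℝ → ℝ) (Λ : Set (ℝ × ℝ)) (s' t' : ℝ) (h : ℝ → ℝ) :
    jumpSum α Λ s' t' h = ∑' p : Λ, dterm α Λ s' t' h p := rfl

lemma abs_dterm_le {a b : ℝ} (ha : 0 < a) {α : ℝ → ℝ} (hrange : ∀ x, α x ∈ Set.Icc a b)
    (Λ : Set (ℝ × ℝ)) (s' t' : ℝ) (h : ℝ → ℝ) (p : Λ) :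
    |dterm α Λ s' t' h p| ≤ wab a b (p : ℝ × ℝ).2 := by
  rw [dterm]
  split_ifs
  · exact abs_spow_le ha (hrange _)
  · simpa using wab_nonneg a b (p : ℝ × ℝ).2

lemma dterm_summable {a b : ℝ} (ha : 0 < a) {α : ℝ → ℝ} (hrange : ∀ x, α x ∈ Set.Icc a b)
    {Λ : Set (ℝ × ℝ)} (hsum : Summable fun p : Λ => wab a b (p : ℝ × ℝ).2)
    (s' t' : ℝ) (h : ℝ → ℝ) : Summable (dterm α Λ s' t' h) :=
  Summable.of_nonneg_of_le (fun p => abs_nonneg _)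
    (fun p => abs_dterm_le ha hrange Λ s' t' h p) hsum |>.of_abs

/-- f(t) is determined by f(s) and the points of Λ in (s,t]×ℝ: f restricted to [s,t]
is the unique càdlàg solution of the corresponding equation started at f(s). -/
theorem stmt5 (a b b' t₀ t₁ a₀ : ℝ) (ha : 0 < a) (hab : a < b) (hbb' : b < b') (hb1 : b' < 1)
    (ht : t₀ < t₁)
    (α : ℝ → ℝ) (hrange : ∀ x, α x ∈ Set.Icc a b) (hsmooth : ContDiff ℝ 1 α)
    (hbd : ∃ C, ∀ x, |deriv α x| ≤ C)
    (Λ : Set (ℝ × ℝ)) (hcount : Λ.Countable)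
    (hsubΛ : Λ ⊆ Set.Ioo t₀ t₁ ×ˢ (Set.univ : Set ℝ))
    (hΛ : Summable fun p : Λ => |(p : ℝ × ℝ).2| ^ (-1 / b'))
    (f : ℝ → ℝ) (hfc : CadlagOn f t₀ t₁)
    (hf : ∀ t ∈ Set.Ico t₀ t₁, f t = a₀ + jumpSum α Λ t₀ t f)
    (s t : ℝ) (hs : t₀ ≤ s) (hst : s < t) (ht1 : t < t₁) :
    (∀ t' ∈ Set.Icc s t, f t' = f s + jumpSum α Λ s t' f) ∧
    ∀ g : ℝ → ℝ, CadlagOn g s t →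
      (∀ t' ∈ Set.Icc s t, g t' = f s + jumpSum α Λ s t' g) →
      Set.EqOn g f (Set.Icc s t) := by
  classical
  obtain ⟨C, hC⟩ := hbd
  have hC0 : 0 ≤ C := le_trans (abs_nonneg _) (hC 0)
  set K : ℝ := C / a ^ 2 with hK
  have hK0 : 0 ≤ K := by positivity
  have hwsum : Summable fun p : Λ => wab a b (p : ℝ × ℝ).2 := wab_summable ha hab hbb' hΛ
  have hw0 : ∀ p : Λ, 0 ≤ wab a b (p : ℝ × ℝ).2 := fun p => wab_nonneg _ _ _
  have hdsum : ∀ (s' t' : ℝ) (h : ℝ → ℝ), Summable (dterm α Λ s' t' h) :=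
    fun s' t' h => dterm_summable ha hrange hwsum s' t' h
  -- Part 1
  have part1 : ∀ t' ∈ Set.Icc s t, f t' = f s + jumpSum α Λ s t' f := by
    intro t' ht'
    have h1 : f t' = a₀ + jumpSum α Λ t₀ t' f :=
      hf t' ⟨hs.trans ht'.1, lt_of_le_of_lt ht'.2 ht1⟩
    have h2 : f s = a₀ + jumpSum α Λ t₀ s f := hf s ⟨hs, hst.trans ht1⟩
    have key : jumpSum α Λ t₀ t' f = jumpSum α Λ t₀ s f + jumpSum α Λ s t' f := by
      rw [jumpSum_eq, jumpSum_eq, jumpSum_eq, ← Summable.tsum_add (hdsum _ _ _) (hdsum _ _ _)]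
      apply tsum_congr
      intro p
      rw [dterm, dterm, dterm]
      rcases le_or_gt ((p : ℝ × ℝ).1) s with hp | hp
      · have h3 : (p : ℝ × ℝ).1 ∉ Set.Ioc s t' := fun h => absurd h.1 (not_lt.2 hp)
        rw [if_neg h3, add_zero]
        apply if_congr _ rfl rfl
        simp only [Set.mem_Ioc]
        exact and_congr_right (fun _ => ⟨fun _ => hp, fun h4 => h4.trans ht'.1⟩)
      · have h3 : (p : ℝ × ℝ).1 ∉ Set.Ioc t₀ s := fun h => absurd h.2 (not_le.2 hp)
        rw [if_neg h3, zero_add]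
        apply if_congr _ rfl rfl
        simp only [Set.mem_Ioc]
        exact and_congr_left (fun _ => ⟨fun _ => hp, fun _ => lt_of_le_of_lt hs hp⟩)
    linarith [h1, h2, key]
  refine ⟨part1, ?_⟩
  -- Part 2 : uniqueness
  intro g hgc hg
  obtain ⟨Rg, hRg⟩ := bdd_of_cadlag hst.le hgc.1 hgc.2
  obtain ⟨Rf, hRf⟩ := bdd_of_cadlag hst.le
    (fun u hu => hfc.1 u ⟨hs.trans hu.1, hu.2.trans ht1⟩)
    (fun u hu => hfc.2 u ⟨lt_of_le_of_lt hs hu.1, hu.2.trans ht1.le⟩)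
  have hRbound : ∀ u ∈ Set.Icc s t, |g u - f u| ≤ Rg + Rf := by
    intro u hu
    have h1 := hRg u hu
    have h2 := hRf u hu
    have := abs_sub_abs_le_abs_sub (g u) (f u)
    have h3 := abs_add_le (g u) (-(f u))
    simp only [abs_neg, ← sub_eq_add_neg] at h3
    linarith
  have hglim : ∀ x ∈ Set.Ioc s t, ∃ L, Filter.Tendsto g (nhdsWithin x (Set.Iio x)) (nhds L) :=
    hgc.2
  have hflim : ∀ x ∈ Set.Ioc s t, ∃ L, Filter.Tendsto f (nhdsWithin x (Set.Iio x)) (nhds L) :=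
    fun x hx => hfc.2 x ⟨lt_of_le_of_lt hs hx.1, hx.2.trans ht1.le⟩
  have main : ∀ u ∈ Set.Icc s t, g u = f u := by
    apply interval_induction (P := fun v => ∀ u ∈ Set.Icc s v, g u = f u) hst.le
    · -- start
      intro u hu
      have hus : u = s := le_antisymm hu.2 hu.1
      subst hus
      have h0 : jumpSum α Λ u u g = 0 := by
        rw [jumpSum_eq]
        have : ∀ p : Λ, dterm α Λ u u g p = 0 := by
          intro p
          rw [dterm, if_neg]
          rw [Set.Ioc_self]
          exact Set.notMem_empty _
        rw [tsum_congr this, tsum_zero]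
      rw [hg u ⟨le_rfl, hst.le⟩, h0, add_zero]
    · -- mono
      intro v w _ hvw hP u hu
      exact hP u ⟨hu.1, hu.2.trans hvw⟩
    · -- closed
      intro c hsc hct hind u hu
      rcases lt_or_eq_of_le hu.2 with hlt | heq
      · exact hind u hu.1 hlt u ⟨hu.1, le_rfl⟩
      · have heqon : ∀ z ∈ Set.Ico s c, g z = f z := fun z hz => hind z hz.1 hz.2 z ⟨hz.1, le_rfl⟩
        have h1 : g c = f s + jumpSum α Λ s c g := hg c ⟨hsc.le, hct⟩
        have h2 : f c = f s + jumpSum α Λ s c f := part1 c ⟨hsc.le, hct⟩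
        have h3 : jumpSum α Λ s c g = jumpSum α Λ s c f := by
          rw [jumpSum_eq, jumpSum_eq]
          apply tsum_congr
          intro p
          rw [dterm, dterm]
          split_ifs with hmem
          · rw [leftLim_eq_of_eqOn hmem.1 (hglim _ ⟨hmem.1, hmem.2.trans hct⟩)
              (hflim _ ⟨hmem.1, hmem.2.trans hct⟩)
              (fun z hz => heqon z ⟨hz.1.le, hz.2.trans_le hmem.2⟩)]
          · rfl
        rw [heq, h1, h2, h3]
    · -- step
      intro v hsv hvt hPv
      set ε : ℝ := 1 / (2 * (K + 1)) with hε
      have hε0 : 0 < ε := by positivity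
      obtain ⟨F, hF⟩ := ((tendsto_order.1
        (tendsto_tsum_compl_atTop_zero (fun p : Λ => wab a b (p : ℝ × ℝ).2))).2 ε hε0).exists
      set X := (F.filter (fun p : Λ => v < (p : ℝ × ℝ).1 ∧ (p : ℝ × ℝ).1 < t)).image
          (fun p : Λ => (p : ℝ × ℝ).1) with hX
      have hXlt : ∀ x ∈ X, v < x ∧ x < t := by
        intro x hx
        rw [hX] at hx
        simp only [Finset.mem_image, Finset.mem_filter] at hx
        obtain ⟨p, ⟨_, hp1, hp2⟩, rfl⟩ := hx
        exact ⟨hp1, hp2⟩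
      obtain ⟨v', hvv', hv't, hv'F⟩ :
          ∃ v', v < v' ∧ v' ≤ t ∧ ∀ p : Λ, p ∈ F → (p : ℝ × ℝ).1 ∉ Set.Ioo v v' := by
        by_cases hXne : X.Nonempty
        · refine ⟨X.min' hXne, (hXlt _ (X.min'_mem hXne)).1, (hXlt _ (X.min'_mem hXne)).2.le, ?_⟩
          intro p hp hmem
          have hin : (p : ℝ × ℝ).1 ∈ X := by
            rw [hX]
            simp only [Finset.mem_image, Finset.mem_filter]
            exact ⟨p, ⟨hp, hmem.1, hmem.2.trans_le (hXlt _ (X.min'_mem hXne)).2.le⟩, rfl⟩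
          exact absurd (X.min'_le _ hin) (not_le.2 hmem.2)
        · refine ⟨t, hvt, le_rfl, ?_⟩
          intro p hp hmem
          apply hXne
          refine ⟨(p : ℝ × ℝ).1, ?_⟩
          rw [hX]
          simp only [Finset.mem_image, Finset.mem_filter]
          exact ⟨p, ⟨hp, hmem.1, hmem.2⟩, rfl⟩
      have Pmid : ∀ u, v < u → u < v' → ∀ z ∈ Set.Icc s u, g z = f z := by
        intro u huv huv'
        have hut : u ≤ t := (huv'.trans_le hv't).le
        have hsu : s ≤ u := hsv.trans huv.le
        set S := (fun z => |g z - f z|) '' Set.Icc s u with hS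
        have hSne : S.Nonempty := ⟨|g s - f s|, s, ⟨le_rfl, hsu⟩, rfl⟩
        have hSbdd : BddAbove S := by
          refine ⟨Rg + Rf, ?_⟩
          rintro x ⟨z, hz, rfl⟩
          exact hRbound z ⟨hz.1, hz.2.trans hut⟩
        set D := sSup S with hD
        have hD0 : 0 ≤ D := le_csSup_of_le hSbdd ⟨s, ⟨le_rfl, hsu⟩, rfl⟩ (abs_nonneg _)
        have hDle : ∀ z ∈ Set.Icc s u, |g z - f z| ≤ D := fun z hz => le_csSup hSbdd ⟨z, hz, rfl⟩
        have hkey : ∀ z ∈ Set.Icc s u, |g z - f z| ≤ (1/2) * D := by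
          intro z hz
          rcases le_or_gt z v with hzv | hzv
          · rw [hPv z ⟨hz.1, hzv⟩, sub_self, abs_zero]
            linarith
          · have hzt : z ≤ t := hz.2.trans hut
            have e1 : g z - f z = (∑' p : Λ, dterm α Λ s z g p) - ∑' p : Λ, dterm α Λ s z f p := by
              rw [hg z ⟨hz.1, hzt⟩, part1 z ⟨hz.1, hzt⟩, jumpSum_eq, jumpSum_eq]
              ring
            rw [e1, ← Summable.tsum_sub (hdsum _ _ _) (hdsum _ _ _)]
            have hpt : ∀ p : Λ, |dterm α Λ s z g p - dterm α Λ s z f p|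
                ≤ (K * D) * (if p ∈ F then 0 else wab a b (p : ℝ × ℝ).2) := by
              intro p
              by_cases hmem : (p : ℝ × ℝ).1 ∈ Set.Ioc s z
              · rcases le_or_gt ((p : ℝ × ℝ).1) v with hpv | hpv
                · have hlim := leftLim_eq_of_eqOn (s := s) (x := (p : ℝ × ℝ).1) hmem.1
                    (hglim _ ⟨hmem.1, hpv.trans hvt.le⟩) (hflim _ ⟨hmem.1, hpv.trans hvt.le⟩)
                    (fun r hr => hPv r ⟨hr.1.le, hr.2.le.trans hpv⟩)
                  rw [dterm, dterm, if_pos hmem, if_pos hmem, hlim, sub_self, abs_zero]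
                  split_ifs
                  · simp
                  · exact mul_nonneg (mul_nonneg hK0 hD0) (hw0 p)
                · have hpF : p ∉ F := fun hpf =>
                    hv'F p hpf ⟨hpv, lt_of_le_of_lt hmem.2 (lt_of_le_of_lt hz.2 huv')⟩
                  rw [if_neg hpF, dterm, dterm, if_pos hmem, if_pos hmem]
                  have hΔ : |Function.leftLim g (p : ℝ × ℝ).1 - Function.leftLim f (p : ℝ × ℝ).1|
                      ≤ D := by
                    apply leftLim_diff_bound hmem.1 (hglim _ ⟨hmem.1, hmem.2.trans hzt⟩)
                      (hflim _ ⟨hmem.1, hmem.2.trans hzt⟩)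
                    intro r hr
                    exact hDle r ⟨hr.1.le, (hr.2.le.trans hmem.2).trans hz.2⟩
                  have hlip := spow_lipschitz ha α hrange hsmooth hC ((p : ℝ × ℝ).2)
                    (Function.leftLim g (p : ℝ × ℝ).1) (Function.leftLim f (p : ℝ × ℝ).1)
                  calc |spow (p : ℝ × ℝ).2 (-1 / α (Function.leftLim g (p : ℝ × ℝ).1))
                        - spow (p : ℝ × ℝ).2 (-1 / α (Function.leftLim f (p : ℝ × ℝ).1))|
                      ≤ K * wab a b (p : ℝ × ℝ).2
                        * |Function.leftLim g (p : ℝ × ℝ).1 - Function.leftLim f (p : ℝ × ℝ).1| := by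
                        rw [hK]; exact hlip
                    _ ≤ K * wab a b (p : ℝ × ℝ).2 * D := by
                        apply mul_le_mul_of_nonneg_left hΔ
                        exact mul_nonneg hK0 (hw0 p)
                    _ = (K * D) * wab a b (p : ℝ × ℝ).2 := by ring
              · rw [dterm, dterm, if_neg hmem, if_neg hmem, sub_self, abs_zero]
                split_ifs
                · simp
                · exact mul_nonneg (mul_nonneg hK0 hD0) (hw0 p)
            have hsum2 : Summable (fun p : Λ =>
                (K * D) * (if p ∈ F then 0 else wab a b (p : ℝ × ℝ).2)) := by
              apply Summable.mul_left
              apply Summable.of_nonneg_of_le _ _ hwsum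
              · intro p; split_ifs; exacts [le_rfl, hw0 p]
              · intro p; split_ifs; exacts [hw0 p, le_rfl]
            have h1 : Summable (fun p : Λ => |dterm α Λ s z g p - dterm α Λ s z f p|) :=
              Summable.of_nonneg_of_le (fun p => abs_nonneg _) hpt hsum2
            have habs : |∑' p : Λ, (dterm α Λ s z g p - dterm α Λ s z f p)|
                ≤ ∑' p : Λ, (K * D) * (if p ∈ F then 0 else wab a b (p : ℝ × ℝ).2) := by
              refine le_trans ?_ (Summable.tsum_le_tsum hpt h1 hsum2)
              have := norm_tsum_le_tsum_norm
                (f := fun p : Λ => dterm α Λ s z g p - dterm α Λ s z f p)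
                (by simpa [Real.norm_eq_abs] using h1)
              simpa [Real.norm_eq_abs] using this
            refine habs.trans ?_
            have e2 : ∑' p : Λ, (K * D) * (if p ∈ F then 0 else wab a b (p : ℝ × ℝ).2)
                = (K * D) * ∑' p : Λ, (if p ∈ F then 0 else wab a b (p : ℝ × ℝ).2) :=
              tsum_mul_left
            have e3 : ∑' p : Λ, (if p ∈ F then 0 else wab a b (p : ℝ × ℝ).2)
                = ∑' p : {x : Λ // x ∉ F}, wab a b ((p : Λ) : ℝ × ℝ).2 := by
              have h := tsum_subtype (α := ℝ) {x : Λ | x ∉ F} (fun p : Λ => wab a b (p : ℝ × ℝ).2)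
              rw [show (∑' p : {x : Λ // x ∉ F}, wab a b ((p : Λ) : ℝ × ℝ).2)
                  = ∑' p : ({x : Λ | x ∉ F} : Set Λ), wab a b ((p : Λ) : ℝ × ℝ).2 from rfl, h]
              exact (tsum_congr fun p => by
                by_cases hp : p ∈ F <;> simp [Set.indicator_apply, hp]).symm
            have hKε : K * ε ≤ 1 / 2 := by
              rw [hε, mul_one_div, div_le_div_iff₀ (by positivity) (by norm_num)]
              linarith
            rw [e2, e3]
            calc (K * D) * ∑' p : {x : Λ // x ∉ F}, wab a b ((p : Λ) : ℝ × ℝ).2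
                ≤ (K * D) * ε := by
                  apply mul_le_mul_of_nonneg_left hF.le (mul_nonneg hK0 hD0)
              _ ≤ (1/2) * D := by nlinarith
        have hcontr : D ≤ (1/2) * D := by
          apply csSup_le hSne
          rintro x ⟨z, hz, rfl⟩
          exact hkey z hz
        have hDzero : D = 0 := by linarith
        intro z hz
        have h4 := hDle z hz
        rw [hDzero] at h4
        have h5 := abs_nonneg (g z - f z)
        exact sub_eq_zero.1 (abs_eq_zero.1 (le_antisymm h4 h5))
      refine ⟨(v + v') / 2, by linarith, by linarith [hv't], ?_⟩
      exact Pmid ((v + v') / 2) (by linarith) (by linarith)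
  exact fun x hx => main x hx
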